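/- A homogeneous polynomial p of degree 2d in n variables is a sum of squares of k-nomials if and only if p(x) = z(x)ᵀ Q z(x), where z(x) is the vector of all monomials of degree d in x₁,...,xₙ and Q is a positive semidefinite matrix of factor width at most k. -/

import Mathlib

open Matrix

/-- `A` has factor width at most `k`: `A = V * Vᵀ` where every column of `V`
has at most `k` nonzero entries. -/
def HasFactorWidthLE {ι : Type*} [Fintype ι] (A : Matrix ι ι ℝ) (k : ℕ) : Prop :=
  ∃ (m : ℕ) (V : Matrix ι (Fin m) ℝ),
    A = V * Vᵀ ∧ ∀ j, {i | V i j ≠ 0}.ncard ≤ k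

/-- The cone `FW^n_k` of psd `n × n` matrices of factor width at most `k`. -/
def FW (n k : ℕ) : Set (Matrix (Fin n) (Fin n) ℝ) :=
  {A | A.PosSemidef ∧ HasFactorWidthLE A k}

/-- The principal submatrix of `A` indexed by the finite set `K`. -/
def principalSub {ι : Type*} (A : Matrix ι ι ℝ) (K : Finset ι) :
    Matrix K K ℝ :=
  A.submatrix (fun i => (i : ι)) (fun j => (j : ι))

/-- The cone `(FW^n_k)^*`: symmetric matrices all of whose `k × k` principal
submatrices are psd. -/
def FWdual (n k : ℕ) : Set (Matrix (Fin n) (Fin n) ℝ) :=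
  {A | A.IsSymm ∧ ∀ K : Finset (Fin n), K.card = k → (principalSub A K).PosSemidef}

/-- The dual cone (within symmetric matrices) with respect to the trace inner
product `⟨Y, X⟩ = trace (Y * Xᵀ)`. -/
def dualSet {n : ℕ} (C : Set (Matrix (Fin n) (Fin n) ℝ)) :
    Set (Matrix (Fin n) (Fin n) ℝ) :=
  {Y | Y.IsSymm ∧ ∀ X ∈ C, 0 ≤ (Y * Xᵀ).trace}

/-- `A` spans an extreme ray of the cone `C`. -/
def SpansExtremeRay {E : Type*} [AddCommMonoid E] [Module ℝ E]
    (C : Set E) (A : E) : Prop :=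
  A ∈ C ∧ A ≠ 0 ∧ ∀ X Y, X ∈ C → Y ∈ C → A = X + Y →
    ∃ a b : ℝ, 0 ≤ a ∧ 0 ≤ b ∧ X = a • A ∧ Y = b • A

/-- `p` is a sum of squares of `k`-nomials (polynomials with at most `k` monomials). -/
def IsSOkS {n : ℕ} (k : ℕ) (p : MvPolynomial (Fin n) ℝ) : Prop :=
  ∃ (m : ℕ) (q : Fin m → MvPolynomial (Fin n) ℝ),
    (∀ i, (q i).support.card ≤ k) ∧ p = ∑ i, (q i) ^ 2

open MvPolynomial

lemma deg_add {σ : Type*} (a b : σ →₀ ℕ) : (a + b).degree = a.degree + b.degree := by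
  classical
  simp only [Finsupp.degree]
  have h : ∀ f : σ →₀ ℕ, ∑ i ∈ f.support, f i = f.sum fun _ e => e := fun f => rfl
  exact map_add _ a b

lemma deg_sum {σ : Type*} (a : σ →₀ ℕ) : (a.sum fun _ e => e) = a.degree := rfl

lemma compMulHigh {σ : Type*} (D : ℕ) (a b : MvPolynomial σ ℝ)
    (ha : ∀ m ∈ a.support, m.degree ≤ D) (hb : ∀ m ∈ b.support, m.degree ≤ D) :
    homogeneousComponent (D + D) (a * b) =
      homogeneousComponent D a * homogeneousComponent D b := by
  classical
  ext m
  rw [coeff_homogeneousComponent, coeff_mul, coeff_mul]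
  by_cases hm : m.degree = D + D
  · rw [if_pos hm]
    refine Finset.sum_congr rfl fun x hx => ?_
    rw [Finset.HasAntidiagonal.mem_antidiagonal] at hx
    have hxx : x.1.degree + x.2.degree = D + D := by rw [← deg_add, hx, hm]
    rw [coeff_homogeneousComponent, coeff_homogeneousComponent]
    by_cases h1 : MvPolynomial.coeff x.1 a = 0
    · simp [h1]
    by_cases h2 : MvPolynomial.coeff x.2 b = 0
    · simp [h2]
    have d1 : x.1.degree ≤ D := ha _ (mem_support_iff.mpr h1)
    have d2 : x.2.degree ≤ D := hb _ (mem_support_iff.mpr h2)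
    rw [if_pos (by omega), if_pos (by omega)]
  · rw [if_neg hm]
    refine (Finset.sum_eq_zero fun x hx => ?_).symm
    rw [Finset.HasAntidiagonal.mem_antidiagonal] at hx
    rw [coeff_homogeneousComponent, coeff_homogeneousComponent]
    by_cases e1 : x.1.degree = D
    · by_cases e2 : x.2.degree = D
      · exfalso; apply hm; rw [← hx, deg_add, e1, e2]
      · rw [if_neg e2, mul_zero]
    · rw [if_neg e1, zero_mul]

lemma compMulLow {σ : Type*} (D : ℕ) (a b : MvPolynomial σ ℝ)
    (ha : ∀ m ∈ a.support, D ≤ m.degree) (hb : ∀ m ∈ b.support, D ≤ m.degree) :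
    homogeneousComponent (D + D) (a * b) =
      homogeneousComponent D a * homogeneousComponent D b := by
  classical
  ext m
  rw [coeff_homogeneousComponent, coeff_mul, coeff_mul]
  by_cases hm : m.degree = D + D
  · rw [if_pos hm]
    refine Finset.sum_congr rfl fun x hx => ?_
    rw [Finset.HasAntidiagonal.mem_antidiagonal] at hx
    have hxx : x.1.degree + x.2.degree = D + D := by rw [← deg_add, hx, hm]
    rw [coeff_homogeneousComponent, coeff_homogeneousComponent]
    by_cases h1 : MvPolynomial.coeff x.1 a = 0
    · simp [h1]
    by_cases h2 : MvPolynomial.coeff x.2 b = 0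
    · simp [h2]
    have d1 : D ≤ x.1.degree := ha _ (mem_support_iff.mpr h1)
    have d2 : D ≤ x.2.degree := hb _ (mem_support_iff.mpr h2)
    rw [if_pos (by omega), if_pos (by omega)]
  · rw [if_neg hm]
    refine (Finset.sum_eq_zero fun x hx => ?_).symm
    rw [Finset.HasAntidiagonal.mem_antidiagonal] at hx
    rw [coeff_homogeneousComponent, coeff_homogeneousComponent]
    by_cases e1 : x.1.degree = D
    · by_cases e2 : x.2.degree = D
      · exfalso; apply hm; rw [← hx, deg_add, e1, e2]
      · rw [if_neg e2, mul_zero]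
    · rw [if_neg e1, zero_mul]

lemma sq_sum_zero {n m : ℕ} (r : Fin m → MvPolynomial (Fin n) ℝ)
    (h : ∑ l, r l ^ 2 = 0) : ∀ l, r l = 0 := by
  intro l
  apply MvPolynomial.funext
  intro x
  have hx : ∑ i, (eval x (r i)) ^ 2 = 0 := by
    have := congrArg (eval x) h
    simpa using this
  have h0 := (Finset.sum_eq_zero_iff_of_nonneg fun i _ => sq_nonneg (eval x (r i))).mp hx l
    (Finset.mem_univ l)
  have : eval x (r l) = 0 := by
    have := pow_eq_zero_iff (n := 2) (by norm_num) |>.mp h0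
    exact this
  simpa using this

lemma hc_of_homog {σ : Type*} {p : MvPolynomial σ ℝ} {D e : ℕ}
    (hp : p.IsHomogeneous D) (he : e ≠ D) : homogeneousComponent e p = 0 := by
  apply homogeneousComponent_eq_zero'
  intro m hm
  intro hmd
  exact mem_support_iff.mp hm (hp.coeff_eq_zero (by rw [hmd]; exact he))

lemma lemE {n N m : ℕ} (z : Fin N → (Fin n →₀ ℕ)) (V : Matrix (Fin N) (Fin m) ℝ) :
    ∑ l, (∑ i, (monomial (z i) (V i l) : MvPolynomial (Fin n) ℝ)) ^ 2
      = ∑ i, ∑ j, monomial (z i + z j) ((V * Vᵀ) i j) := by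
  have step : ∀ l, (∑ i, (monomial (z i) (V i l) : MvPolynomial (Fin n) ℝ)) ^ 2
      = ∑ i, ∑ j, monomial (z i + z j) (V i l * V j l) := by
    intro l
    rw [sq, Finset.sum_mul_sum]
    refine Finset.sum_congr rfl fun i _ => Finset.sum_congr rfl fun j _ => ?_
    rw [monomial_mul]
  rw [Finset.sum_congr rfl fun l _ => step l, Finset.sum_comm]
  refine Finset.sum_congr rfl fun i _ => ?_
  rw [Finset.sum_comm]
  refine Finset.sum_congr rfl fun j _ => ?_
  rw [Matrix.mul_apply]
  simp only [Matrix.transpose_apply]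
  exact (map_sum (monomial (z i + z j)) _ _).symm

open MvPolynomial in
/-- a homogeneous polynomial of degree `2d` is a sum of squares of
`k`-nomials iff it has a Gram matrix of factor width at most `k`, indexed by the
degree-`d` monomials. -/
theorem stmt1 (n d k : ℕ) (p : MvPolynomial (Fin n) ℝ)
    (hp : p.IsHomogeneous (2 * d))
    (N : ℕ) (hN : N = Nat.choose (n + d - 1) d)
    (z : Fin N → (Fin n →₀ ℕ)) (hz : Function.Injective z)
    (hzr : Set.range z = {m : Fin n →₀ ℕ | (m.sum fun _ e => e) = d}) :
    IsSOkS k p ↔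
      ∃ Q : Matrix (Fin N) (Fin N) ℝ, Q.PosSemidef ∧ HasFactorWidthLE Q k ∧
        p = ∑ i, ∑ j, monomial (z i + z j) (Q i j) := by
  classical
  have hr : ∀ mo : Fin n →₀ ℕ, mo.degree = d → ∃ i, z i = mo := by
    intro mo h
    have : mo ∈ Set.range z := by rw [hzr]; simpa [deg_sum] using h
    exact this
  constructor
  · rintro ⟨m, q, hsupp, hpq⟩
    set W : Finset (Fin n →₀ ℕ) := Finset.univ.biUnion (fun l => (q l).support) with hW
    have hWmem : ∀ l, ∀ mo ∈ (q l).support, mo ∈ W := by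
      intro l mo h
      exact Finset.mem_biUnion.mpr ⟨l, Finset.mem_univ l, h⟩
    -- every monomial in any q l has degree ≤ d
    have high : ∀ mo ∈ W, mo.degree ≤ d := by
      by_contra hcon
      push_neg at hcon
      obtain ⟨m0, hm0W, hm0⟩ := hcon
      have hWne : W.Nonempty := ⟨m0, hm0W⟩
      set D := W.sup' hWne Finsupp.degree with hD
      have hDd : d < D := lt_of_lt_of_le hm0 (Finset.le_sup' _ hm0W)
      have hbound : ∀ l, ∀ mo ∈ (q l).support, mo.degree ≤ D :=
        fun l mo h => Finset.le_sup' _ (hWmem l mo h)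
      have hcomp : homogeneousComponent (D + D) p
          = ∑ l, (homogeneousComponent D (q l)) ^ 2 := by
        rw [hpq, map_sum]
        refine Finset.sum_congr rfl fun l _ => ?_
        rw [sq, sq]
        exact compMulHigh D _ _ (hbound l) (hbound l)
      have hzero : homogeneousComponent (D + D) p = 0 := hc_of_homog hp (by omega)
      have hall := sq_sum_zero _ (by rw [← hcomp, hzero])
      obtain ⟨m1, hm1, hm1d⟩ := Finset.exists_mem_eq_sup' hWne Finsupp.degree
      obtain ⟨l1, _, hl1⟩ := Finset.mem_biUnion.mp hm1
      have : MvPolynomial.coeff m1 (homogeneousComponent D (q l1)) ≠ 0 := by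
        rw [coeff_homogeneousComponent, if_pos hm1d.symm]
        exact mem_support_iff.mp hl1
      rw [hall l1] at this
      simp at this
    have low : ∀ mo ∈ W, d ≤ mo.degree := by
      by_contra hcon
      push_neg at hcon
      obtain ⟨m0, hm0W, hm0⟩ := hcon
      have hWne : W.Nonempty := ⟨m0, hm0W⟩
      set D := W.inf' hWne Finsupp.degree with hD
      have hDd : D < d := lt_of_le_of_lt (Finset.inf'_le _ hm0W) hm0
      have hbound : ∀ l, ∀ mo ∈ (q l).support, D ≤ mo.degree :=
        fun l mo h => Finset.inf'_le _ (hWmem l mo h)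
      have hcomp : homogeneousComponent (D + D) p
          = ∑ l, (homogeneousComponent D (q l)) ^ 2 := by
        rw [hpq, map_sum]
        refine Finset.sum_congr rfl fun l _ => ?_
        rw [sq, sq]
        exact compMulLow D _ _ (hbound l) (hbound l)
      have hzero : homogeneousComponent (D + D) p = 0 := hc_of_homog hp (by omega)
      have hall := sq_sum_zero _ (by rw [← hcomp, hzero])
      obtain ⟨m1, hm1, hm1d⟩ := Finset.exists_mem_eq_inf' hWne Finsupp.degree
      obtain ⟨l1, _, hl1⟩ := Finset.mem_biUnion.mp hm1
      have : MvPolynomial.coeff m1 (homogeneousComponent D (q l1)) ≠ 0 := by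
        rw [coeff_homogeneousComponent, if_pos hm1d.symm]
        exact mem_support_iff.mp hl1
      rw [hall l1] at this
      simp at this
    have key : ∀ l, ∀ mo ∈ (q l).support, mo.degree = d :=
      fun l mo h => le_antisymm (high mo (hWmem l mo h)) (low mo (hWmem l mo h))
    set V : Matrix (Fin N) (Fin m) ℝ :=
      Matrix.of fun i l => MvPolynomial.coeff (z i) (q l) with hV
    have repr : ∀ l, q l = ∑ i, monomial (z i) (V i l) := by
      intro l
      set F : Finset (Fin N) := Finset.univ.filter (fun i => z i ∈ (q l).support) with hF
      have himg : (q l).support = F.image z := by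
        ext mo
        simp only [hF, Finset.mem_image, Finset.mem_filter, Finset.mem_univ, true_and]
        constructor
        · intro h
          obtain ⟨i, hi⟩ := hr mo (key l mo h)
          exact ⟨i, by rw [hi]; exact h, hi⟩
        · rintro ⟨i, hi, rfl⟩; exact hi
      calc q l = ∑ mo ∈ (q l).support, monomial mo (MvPolynomial.coeff mo (q l)) :=
            (support_sum_monomial_coeff _).symm
        _ = ∑ i ∈ F, monomial (z i) (MvPolynomial.coeff (z i) (q l)) := by
            rw [himg, Finset.sum_image (fun a _ b _ h => hz h)]
        _ = ∑ i, monomial (z i) (V i l) := by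
            refine Finset.sum_subset (Finset.subset_univ F) fun i _ hi => ?_
            have : MvPolynomial.coeff (z i) (q l) = 0 := by
              by_contra hc
              exact hi (by simp [hF, mem_support_iff, hc])
            simp [hV, this]
    refine ⟨V * Vᵀ, ?_, ⟨m, V, rfl, ?_⟩, ?_⟩
    · have := Matrix.posSemidef_self_mul_conjTranspose V
      rwa [Matrix.conjTranspose_eq_transpose_of_trivial] at this
    · intro j
      have hset : {i | V i j ≠ 0} =
          ↑(Finset.univ.filter (fun i => V i j ≠ 0)) := by
        ext i; simp
      rw [hset, Set.ncard_coe_finset]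
      refine le_trans (Finset.card_le_card_of_injOn z (fun i hi => ?_)
        (fun a _ b _ h => hz h)) (hsupp j)
      rw [Finset.mem_coe, Finset.mem_filter] at hi
      exact Finset.mem_coe.mpr (mem_support_iff.mpr hi.2)
    · rw [hpq, Finset.sum_congr rfl fun l _ => by rw [repr l]]
      exact lemE z V
  · rintro ⟨Q, hQpsd, ⟨m, V, hQV, hcol⟩, hpeq⟩
    refine ⟨m, fun l => ∑ i, monomial (z i) (V i l), ?_, ?_⟩
    · intro l
      have hsub : (∑ i, (monomial (z i) (V i l) : MvPolynomial (Fin n) ℝ)).support ⊆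
          (Finset.univ.filter (fun i => V i l ≠ 0)).image z := by
        intro mo hmo
        obtain ⟨i, _, hi⟩ := Finset.mem_biUnion.mp (MvPolynomial.support_sum hmo)
        have h1 : (monomial (z i) (V i l) : MvPolynomial (Fin n) ℝ).support ⊆ {z i} := by
          rw [support_monomial]
          split <;> simp
        have h2 : mo = z i := Finset.mem_singleton.mp (h1 hi)
        have h3 : V i l ≠ 0 := by
          intro h0
          rw [h0] at hi
          simp at hi
        exact Finset.mem_image.mpr ⟨i, Finset.mem_filter.mpr ⟨Finset.mem_univ i, h3⟩, h2.symm⟩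
      refine le_trans (Finset.card_le_card hsub) ?_
      refine le_trans (Finset.card_image_le) ?_
      have hset : {i | V i l ≠ 0} =
          ↑(Finset.univ.filter (fun i => V i l ≠ 0)) := by
        ext i; simp
      have := hcol l
      rwa [hset, Set.ncard_coe_finset] at this
    · rw [hpeq, hQV]
      exact (lemE z V).symm
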